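/- arXiv:2605.00469 — 5 statements merged into one kernel-verified Lean document; each statement's English description precedes it below -/
import Mathlib

section
/- Let A=(a_ij) be an n×n symmetrizable GCM with symmetrizer d_1,…,d_n. Let β_1,…,β_m be real roots of A, say β_i=w_i·α_{p_i} with coroots β_i∨=w_i·α_{p_i}∨, which are linearly independent in Q⊗ℚ (for instance the members of a linearly independent π-system in A), and let B=(⟨β_i∨,β_j⟩)_{i,j=1}^m. Then: (1) m≤n; (2) if m=n, then det B = k·det A for some integer k≥1; (3) if m=n, then the symmetrized matrices diag((β_i,β_i)/2)·B and diag(d_i)·A are congruent over ℝ, i.e., there is an invertible real matrix V with diag((β_i,β_i)/2)·B = V·(diag(d_i)·A)·Vᵀ; in particular they have the same signature. -/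
/-- An integer matrix is a generalized Cartan matrix. -/
def IsGCM {n : ℕ} (A : Matrix (Fin n) (Fin n) ℤ) : Prop :=
  (∀ i, A i i = 2) ∧ (∀ i j, i ≠ j → A i j ≤ 0) ∧ (∀ i j, A i j = 0 → A j i = 0)

/-- `d` is a symmetrizer of `A`: positive rationals with `dᵢ aᵢⱼ = dⱼ aⱼᵢ`. -/
def IsSymmetrizer {n : ℕ} (A : Matrix (Fin n) (Fin n) ℤ) (d : Fin n → ℚ) : Prop :=
  (∀ i, 0 < d i) ∧ ∀ i j, d i * A i j = d j * A j i

/-- The pairing `⟨γ∨, β⟩` between the coroot lattice and the root lattice: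
in coordinates (γ in the coroot basis, β in the root basis) it is `∑ γᵢ aᵢⱼ βⱼ`,
so that `⟨αᵢ∨, αⱼ⟩ = aᵢⱼ`. -/
def pairing {n : ℕ} (A : Matrix (Fin n) (Fin n) ℤ) (y x : Fin n → ℤ) : ℤ :=
  ∑ i, ∑ j, y i * A i j * x j

/-- Simple reflection `s_k` acting on the root lattice: `s_k x = x − ⟨α_k∨, x⟩ α_k`. -/
def sRoot {n : ℕ} (A : Matrix (Fin n) (Fin n) ℤ) (k : Fin n) (x : Fin n → ℤ) : Fin n → ℤ :=
  fun i => x i - (if i = k then ∑ j, A k j * x j else 0)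

/-- Simple reflection `s_k` acting on the coroot lattice: `s_k(αⱼ∨) = αⱼ∨ − aⱼₖ α_k∨`. -/
def sCoroot {n : ℕ} (A : Matrix (Fin n) (Fin n) ℤ) (k : Fin n) (y : Fin n → ℤ) : Fin n → ℤ :=
  fun i => y i - (if i = k then ∑ j, y j * A j k else 0)

/-- Action on the root lattice of a Weyl group element given as a word in simple reflections. -/
def actRoot {n : ℕ} (A : Matrix (Fin n) (Fin n) ℤ) (w : List (Fin n)) (x : Fin n → ℤ) :
    Fin n → ℤ :=
  w.foldr (sRoot A) x

/-- Action on the coroot lattice of a Weyl group element given as a word in simple reflections. -/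
def actCoroot {n : ℕ} (A : Matrix (Fin n) (Fin n) ℤ) (w : List (Fin n)) (y : Fin n → ℤ) :
    Fin n → ℤ :=
  w.foldr (sCoroot A) y

/-- The invariant symmetric bilinear form on `Q ⊗ ℚ` determined by a symmetrizer `d`:
`(αᵢ, αⱼ) = dᵢ aᵢⱼ`. -/
def formQ {n : ℕ} (A : Matrix (Fin n) (Fin n) ℤ) (d : Fin n → ℚ) (x y : Fin n → ℤ) : ℚ :=
  ∑ i, ∑ j, d i * (A i j : ℚ) * (x i : ℚ) * (y j : ℚ)

section Aux

variable {n : ℕ} (A : Matrix (Fin n) (Fin n) ℤ) (d : Fin n → ℚ)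

lemma pairing_sCoroot (k : Fin n) (y x : Fin n → ℤ) :
    pairing A (sCoroot A k y) x
      = pairing A y x - (∑ j, y j * A j k) * (∑ j, A k j * x j) := by
  unfold pairing sCoroot
  simp only [sub_mul, Finset.sum_sub_distrib, ite_mul, zero_mul]
  congr 1
  rw [Finset.sum_comm]
  simp [Finset.mul_sum, Finset.sum_ite_eq', mul_assoc]

lemma pairing_sRoot (k : Fin n) (y x : Fin n → ℤ) :
    pairing A y (sRoot A k x)
      = pairing A y x - (∑ j, y j * A j k) * (∑ j, A k j * x j) := by
  unfold pairing sRoot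
  simp only [mul_sub, Finset.sum_sub_distrib, mul_ite, mul_zero]
  congr 1
  simp [Finset.sum_ite_eq', Finset.sum_mul]

lemma formQ_sRoot_left (k : Fin n) (x y : Fin n → ℤ) :
    formQ A d (sRoot A k x) y
      = formQ A d x y - ((∑ j, A k j * x j : ℤ) : ℚ) * ∑ j, d k * (A k j : ℚ) * (y j : ℚ) := by
  unfold formQ sRoot
  push_cast [apply_ite (fun t : ℤ => (t : ℚ))]
  simp only [mul_sub, sub_mul, mul_ite, ite_mul, mul_zero, zero_mul, Finset.sum_sub_distrib]
  congr 1
  rw [Finset.sum_comm]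
  simp only [Finset.sum_ite_eq', Finset.mem_univ, if_true, Finset.sum_mul, Finset.mul_sum]
  exact Finset.sum_congr rfl fun i _ => Finset.sum_congr rfl fun j _ => by ring

lemma formQ_sRoot_right (k : Fin n) (x y : Fin n → ℤ) :
    formQ A d x (sRoot A k y)
      = formQ A d x y - ((∑ j, A k j * y j : ℤ) : ℚ) * ∑ i, d i * (A i k : ℚ) * (x i : ℚ) := by
  unfold formQ sRoot
  push_cast [apply_ite (fun t : ℤ => (t : ℚ))]
  simp only [mul_sub, sub_mul, mul_ite, ite_mul, mul_zero, zero_mul, Finset.sum_sub_distrib]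
  congr 1
  simp only [Finset.sum_ite_eq', Finset.mem_univ, if_true, Finset.sum_mul, Finset.mul_sum]
  exact Finset.sum_congr rfl fun i _ => Finset.sum_congr rfl fun j _ => by ring

lemma pairing_adj (k : Fin n) (y x : Fin n → ℤ) :
    pairing A (sCoroot A k y) x = pairing A y (sRoot A k x) := by
  rw [pairing_sCoroot, pairing_sRoot]

lemma col_sum_eq (hd : IsSymmetrizer A d) (k : Fin n) (z : Fin n → ℤ) :
    (∑ i, d i * (A i k : ℚ) * (z i : ℚ)) = d k * ((∑ j, A k j * z j : ℤ) : ℚ) := by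
  push_cast
  rw [Finset.mul_sum]
  exact Finset.sum_congr rfl fun i _ => by rw [← mul_assoc, hd.2 k i]

lemma formQ_adj (hd : IsSymmetrizer A d) (k : Fin n) (x y : Fin n → ℤ) :
    formQ A d (sRoot A k x) y = formQ A d x (sRoot A k y) := by
  rw [formQ_sRoot_left, formQ_sRoot_right, col_sum_eq A d hd]
  have : (∑ j, d k * (A k j : ℚ) * (y j : ℚ)) = d k * ((∑ j, A k j * y j : ℤ) : ℚ) := by
    push_cast
    rw [Finset.mul_sum]
    simp [mul_assoc]
  rw [this]; ring

lemma sRoot_invol (k : Fin n) (hAkk : A k k = 2) (x : Fin n → ℤ) :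
    sRoot A k (sRoot A k x) = x := by
  funext i
  unfold sRoot
  by_cases hik : i = k
  · subst hik
    simp only [if_true]
    have : (∑ j, A i j * (x j - if j = i then ∑ l, A i l * x l else 0))
        = - ∑ j, A i j * x j := by
      simp only [mul_sub, mul_ite, mul_zero, Finset.sum_sub_distrib, Finset.sum_ite_eq',
        Finset.mem_univ, if_true, hAkk]
      ring
    rw [this]; ring
  · simp [hik]

lemma pairing_single_left (p : Fin n) (x : Fin n → ℤ) :
    pairing A (Pi.single p 1) x = ∑ j, A p j * x j := by
  unfold pairing
  simp [Pi.single_apply, ite_mul, zero_mul, Finset.sum_ite_eq]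

lemma pairing_single_right (c : Fin n) (z : Fin n → ℤ) :
    pairing A z (Pi.single c 1) = ∑ i, z i * A i c := by
  unfold pairing
  simp [Pi.single_apply, mul_ite, mul_zero, Finset.sum_ite_eq']

lemma formQ_single_left (p : Fin n) (y : Fin n → ℤ) :
    formQ A d (Pi.single p 1) y = ∑ j, d p * (A p j : ℚ) * (y j : ℚ) := by
  unfold formQ
  simp [Pi.single_apply, apply_ite (fun t : ℤ => (t : ℚ)), mul_ite, ite_mul, mul_zero, zero_mul,
    Finset.sum_ite_eq]

lemma formQ_single_right (c : Fin n) (x : Fin n → ℤ) :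
    formQ A d x (Pi.single c 1) = ∑ i, d i * (A i c : ℚ) * (x i : ℚ) := by
  unfold formQ
  simp [Pi.single_apply, apply_ite (fun t : ℤ => (t : ℚ)), mul_ite, ite_mul, mul_zero, zero_mul,
    Finset.sum_ite_eq']

lemma key_pair (hd : IsSymmetrizer A d) (w : List (Fin n)) (p : Fin n) (x : Fin n → ℤ) :
    d p * ((pairing A (actCoroot A w (Pi.single p 1)) x : ℤ) : ℚ)
      = formQ A d (actRoot A w (Pi.single p 1)) x := by
  unfold actRoot actCoroot
  induction w generalizing x with
  | nil =>
      simp only [List.foldr_nil]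
      rw [pairing_single_left, formQ_single_left]
      push_cast
      rw [Finset.mul_sum]
      exact Finset.sum_congr rfl fun i _ => by ring
  | cons k w ih =>
      simp only [List.foldr_cons]
      rw [pairing_adj, ih, formQ_adj A d hd]

lemma key_norm (hd : IsSymmetrizer A d) (hAkk : ∀ k, A k k = 2) (w : List (Fin n)) (p : Fin n) :
    formQ A d (actRoot A w (Pi.single p 1)) (actRoot A w (Pi.single p 1)) = 2 * d p := by
  unfold actRoot
  induction w with
  | nil =>
      simp only [List.foldr_nil]
      rw [formQ_single_left]
      simp [Pi.single_apply, apply_ite (fun t : ℤ => (t : ℚ)), mul_ite, mul_zero,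
        Finset.sum_ite_eq, hAkk p]
      ring
  | cons k w ih =>
      simp only [List.foldr_cons]
      rw [formQ_adj A d hd, sRoot_invol A k (hAkk k), ih]

end Aux

/-- For linearly independent real roots `β₁,…,β_m` of a symmetrizable GCM `A`
with `B = (⟨βᵢ∨, βⱼ⟩)`: (1) `m ≤ n`; (2) if `m = n` then `det B = k · det A` for some
integer `k ≥ 1`; (3) if `m = n` then `diag((βᵢ,βᵢ)/2)·B` and `diag(dᵢ)·A` are congruent
over ℝ (hence have the same signature). -/
theorem pisystem_det_signature {n m : ℕ} (A : Matrix (Fin n) (Fin n) ℤ) (hA : IsGCM A)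
    (d : Fin n → ℚ) (hd : IsSymmetrizer A d)
    (w : Fin m → List (Fin n)) (p : Fin m → Fin n)
    (β βv : Fin m → Fin n → ℤ)
    (hβ : ∀ i, β i = actRoot A (w i) (Pi.single (p i) 1))
    (hβv : ∀ i, βv i = actCoroot A (w i) (Pi.single (p i) 1))
    (hli : LinearIndependent ℚ (fun i => fun k => ((β i k : ℚ))))
    (B : Matrix (Fin m) (Fin m) ℤ)
    (hB : ∀ i j, B i j = pairing A (βv i) (β j)) :
    m ≤ n
    ∧ (m = n → ∃ k : ℤ, 1 ≤ k ∧ B.det = k * A.det)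
    ∧ (∀ h : m = n, ∃ V : Matrix (Fin m) (Fin m) ℝ, IsUnit V.det ∧
        Matrix.diagonal (fun i => ((formQ A d (β i) (β i) : ℝ)) / 2) *
            B.map (fun t => (t : ℝ))
          = V * (Matrix.diagonal (fun i => ((d (Fin.cast h i) : ℝ))) *
              (A.submatrix (Fin.cast h) (Fin.cast h)).map (fun t => (t : ℝ))) * V.transpose) := by
  have hAkk : ∀ k, A k k = 2 := hA.1
  refine ⟨?_, ?_, ?_⟩
  · simpa using hli.fintype_card_le_finrank
  · intro h
    subst h
    set C : Matrix (Fin m) (Fin m) ℤ := Matrix.of β with hCdef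
    set Cv : Matrix (Fin m) (Fin m) ℤ := Matrix.of βv with hCvdef
    have hBmat : B = Cv * A * C.transpose := by
      ext i j
      rw [hB]
      simp only [Matrix.mul_apply, Matrix.transpose_apply, Matrix.of_apply, pairing,
        hCdef, hCvdef]
      rw [Finset.sum_comm]
      simp [Finset.sum_mul]
    have hdetB : B.det = (Cv.det * C.det) * A.det := by
      rw [hBmat, Matrix.det_mul, Matrix.det_mul, Matrix.det_transpose]; ring
    by_cases hAdet : A.det = 0
    · exact ⟨1, le_refl 1, by rw [hdetB, hAdet]; ring⟩
    · refine ⟨Cv.det * C.det, ?_, by rw [hdetB]⟩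
      -- positivity over ℚ
      have hrel : Matrix.diagonal (fun i => d (p i)) *
            (Cv.map (Int.cast : ℤ → ℚ) * A.map (Int.cast : ℤ → ℚ))
          = (C.map (Int.cast : ℤ → ℚ) * Matrix.diagonal d) * A.map (Int.cast : ℤ → ℚ) := by
        ext i j
        have h1 := key_pair A d hd (w i) (p i) (Pi.single j 1)
        rw [← hβ i, ← hβv i, pairing_single_right, formQ_single_right] at h1
        push_cast at h1
        simp only [Matrix.mul_apply, Matrix.diagonal_apply, Matrix.map_apply,
          Matrix.of_apply, hCdef, hCvdef, ite_mul, mul_ite, zero_mul, mul_zero,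
          Finset.sum_ite_eq, Finset.sum_ite_eq', Finset.mem_univ, if_true]
        rw [h1]
        exact Finset.sum_congr rfl fun k _ => by ring
      have hCvQ : (Cv.map (Int.cast : ℤ → ℚ)).det = ((Cv.det : ℤ) : ℚ) :=
        (RingHom.map_det (Int.castRingHom ℚ) Cv).symm
      have hCQ : (C.map (Int.cast : ℤ → ℚ)).det = ((C.det : ℤ) : ℚ) :=
        (RingHom.map_det (Int.castRingHom ℚ) C).symm
      have hAQ : (A.map (Int.cast : ℤ → ℚ)).det = ((A.det : ℤ) : ℚ) :=
        (RingHom.map_det (Int.castRingHom ℚ) A).symm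
      have hdetrel := congrArg Matrix.det hrel
      rw [Matrix.det_mul, Matrix.det_mul, Matrix.det_mul, Matrix.det_mul,
        Matrix.det_diagonal, Matrix.det_diagonal, hCvQ, hCQ, hAQ] at hdetrel
      have hAQne : ((A.det : ℤ) : ℚ) ≠ 0 := Int.cast_ne_zero.mpr hAdet
      have hcancel : (∏ i, d (p i)) * ((Cv.det : ℤ) : ℚ)
          = ((C.det : ℤ) : ℚ) * ∏ i, d i := by
        apply mul_right_cancel₀ hAQne
        linear_combination hdetrel
      have hCli : LinearIndependent ℚ (fun i => (C.map (Int.cast : ℤ → ℚ)) i) := hli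
      have hCunit : IsUnit (C.map (Int.cast : ℤ → ℚ)) :=
        Matrix.linearIndependent_rows_iff_isUnit.mp hCli
      have hCne : ((C.det : ℤ) : ℚ) ≠ 0 := by
        rw [← hCQ]
        exact ((Matrix.isUnit_iff_isUnit_det _).mp hCunit).ne_zero
      have hp1 : (0:ℚ) < ∏ i, d (p i) := Finset.prod_pos fun i _ => hd.1 _
      have hp2 : (0:ℚ) < ((C.det : ℤ) : ℚ)^2 * ∏ i, d i :=
        mul_pos (pow_two_pos_of_ne_zero hCne) (Finset.prod_pos fun i _ => hd.1 _)
      have hprod : (∏ i, d (p i)) * (((Cv.det : ℤ) : ℚ) * ((C.det : ℤ) : ℚ))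
          = ((C.det : ℤ) : ℚ)^2 * ∏ i, d i := by
        linear_combination ((C.det : ℤ) : ℚ) * hcancel
      have hfin : (0:ℚ) < ((Cv.det : ℤ) : ℚ) * ((C.det : ℤ) : ℚ) := by
        nlinarith [hp1, hp2, hprod]
      have : (0:ℤ) < Cv.det * C.det := by exact_mod_cast hfin
      omega
  · intro h
    subst h
    set C : Matrix (Fin m) (Fin m) ℤ := Matrix.of β with hCdef
    have hCli : LinearIndependent ℚ (fun i => (C.map (Int.cast : ℤ → ℚ)) i) := hli
    have hCunit : IsUnit (C.map (Int.cast : ℤ → ℚ)) :=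
      Matrix.linearIndependent_rows_iff_isUnit.mp hCli
    have hCQ : (C.map (Int.cast : ℤ → ℚ)).det = ((C.det : ℤ) : ℚ) :=
      (RingHom.map_det (Int.castRingHom ℚ) C).symm
    have hCne : C.det ≠ 0 := by
      have := ((Matrix.isUnit_iff_isUnit_det _).mp hCunit).ne_zero
      rw [hCQ] at this
      exact_mod_cast this
    refine ⟨C.map (Int.cast : ℤ → ℝ), ?_, ?_⟩
    · have : (C.map (Int.cast : ℤ → ℝ)).det = ((C.det : ℤ) : ℝ) :=
        (RingHom.map_det (Int.castRingHom ℝ) C).symm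
      rw [this]
      exact isUnit_iff_ne_zero.mpr (Int.cast_ne_zero.mpr hCne)
    · ext i j
      have hnorm : formQ A d (β i) (β i) = 2 * d (p i) := by
        rw [hβ i]; exact key_norm A d hd hAkk (w i) (p i)
      have hval : d (p i) * ((pairing A (βv i) (β j) : ℤ) : ℚ) = formQ A d (β i) (β j) := by
        rw [hβ i, hβv i]; exact key_pair A d hd (w i) (p i) _
      have hL : (Matrix.diagonal (fun i => ((formQ A d (β i) (β i) : ℚ) : ℝ) / 2) *
            B.map (fun t : ℤ => (t : ℝ))) i j = ((formQ A d (β i) (β j) : ℚ) : ℝ) := by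
        rw [Matrix.diagonal_mul, Matrix.map_apply, hB i j, hnorm, ← hval]
        push_cast
        ring
      rw [hL]
      simp only [Matrix.mul_apply, Matrix.transpose_apply, Matrix.diagonal_apply,
        Matrix.map_apply, Matrix.submatrix_apply, Matrix.of_apply, Fin.cast_refl, id_eq,
        hCdef, ite_mul, mul_ite, zero_mul, mul_zero, Finset.sum_ite_eq, Finset.sum_ite_eq',
        Finset.mem_univ, if_true]
      unfold formQ
      push_cast
      rw [Finset.sum_comm]
      simp only [Finset.sum_mul]
      exact Finset.sum_congr rfl fun a _ => Finset.sum_congr rfl fun b _ => by ring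
end

section
/- Let A be an n×n and B an m×m symmetrizable GCM. Suppose there exist m linearly independent real roots β_1,…,β_m of A (β_i=w_i·α_{p_i}, β_i∨=w_i·α_{p_i}∨) with (⟨β_i∨,β_j⟩)_{i,j}=B, and n linearly independent real roots γ_1,…,γ_n of B with (⟨γ_i∨,γ_j⟩)_{i,j}=A (i.e., B⪯A and A⪯B in the Morita relation). Then m=n and det A = det B. -/
open Matrix


/-- One-step compatibility of the symmetrizer with the reflection actions. -/
lemma morita_key_step {n : ℕ} (A : Matrix (Fin n) (Fin n) ℤ) (d : Fin n → ℚ)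
    (hd : ∀ i j, d i * A i j = d j * A j i) (k : Fin n) (x y : Fin n → ℤ) (c : ℚ)
    (h : ∀ i, c * (y i : ℚ) = d i * (x i : ℚ)) (i : Fin n) :
    c * ((sCoroot A k y i : ℤ) : ℚ) = d i * ((sRoot A k x i : ℤ) : ℚ) := by
  by_cases hik : i = k
  · subst hik
    simp only [sCoroot, sRoot, if_pos rfl]
    push_cast
    have h1 : c * (∑ j, (y j : ℚ) * (A j i : ℚ)) = d i * (∑ j, (A i j : ℚ) * (x j : ℚ)) := by
      rw [Finset.mul_sum, Finset.mul_sum]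
      refine Finset.sum_congr rfl fun j _ => ?_
      linear_combination (A j i : ℚ) * h j + (x j : ℚ) * hd j i
    linear_combination h i - h1
  · simp only [sCoroot, sRoot, if_neg hik, sub_zero]
    exact h i

/-- Compatibility of the symmetrizer with the action of any word. -/
lemma morita_key {n : ℕ} (A : Matrix (Fin n) (Fin n) ℤ) (d : Fin n → ℚ)
    (hd : ∀ i j, d i * A i j = d j * A j i) (w : List (Fin n)) (x y : Fin n → ℤ) (c : ℚ)
    (h : ∀ i, c * (y i : ℚ) = d i * (x i : ℚ)) :
    ∀ i, c * ((actCoroot A w y i : ℤ) : ℚ) = d i * ((actRoot A w x i : ℤ) : ℚ) := by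
  induction w with
  | nil => exact h
  | cons k t ih =>
      exact morita_key_step A d hd k (actRoot A t x) (actCoroot A t y) c ih

/-- The pairing matrix as a matrix product. -/
lemma pairing_matrix {n m : ℕ} (A : Matrix (Fin n) (Fin n) ℤ)
    (Y X : Matrix (Fin m) (Fin n) ℤ) (i j : Fin m) :
    pairing A (Y i) (X j) = (Y * A * Xᵀ) i j := by
  simp only [pairing, Matrix.mul_apply, Matrix.transpose_apply, Finset.sum_mul]
  rw [Finset.sum_comm]

/-- If `B ⪯ A` and `A ⪯ B` in the Morita relation (there are linearly
independent π-systems of type `B` in `A` and of type `A` in `B`), then the two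
symmetrizable GCMs have the same size and equal determinants. -/
theorem morita_antisymm_size_det {n m : ℕ}
    (A : Matrix (Fin n) (Fin n) ℤ) (hA : IsGCM A) (hAs : ∃ d, IsSymmetrizer A d)
    (B : Matrix (Fin m) (Fin m) ℤ) (hB : IsGCM B) (hBs : ∃ d, IsSymmetrizer B d)
    (hBA : ∃ (w : Fin m → List (Fin n)) (p : Fin m → Fin n),
      LinearIndependent ℚ
        (fun i => fun k => ((actRoot A (w i) (Pi.single (p i) 1)) k : ℚ)) ∧
      ∀ i j, pairing A (actCoroot A (w i) (Pi.single (p i) 1))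
          (actRoot A (w j) (Pi.single (p j) 1)) = B i j)
    (hAB : ∃ (w : Fin n → List (Fin m)) (p : Fin n → Fin m),
      LinearIndependent ℚ
        (fun i => fun k => ((actRoot B (w i) (Pi.single (p i) 1)) k : ℚ)) ∧
      ∀ i j, pairing B (actCoroot B (w i) (Pi.single (p i) 1))
          (actRoot B (w j) (Pi.single (p j) 1)) = A i j) :
    m = n ∧ A.det = B.det := by
  obtain ⟨dA, hdApos, hdA⟩ := hAs
  obtain ⟨w1, p1, hli1, hpair1⟩ := hBA
  obtain ⟨w2, p2, hli2, hpair2⟩ := hAB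
  -- m = n
  have hmn : m = n := by
    have h1 : m ≤ n := by
      simpa using hli1.fintype_card_le_finrank
    have h2 : n ≤ m := by
      simpa using hli2.fintype_card_le_finrank
    omega
  subst hmn
  refine ⟨rfl, ?_⟩
  -- the four integer matrices
  set X : Matrix (Fin m) (Fin m) ℤ :=
    Matrix.of (fun i => actRoot A (w1 i) (Pi.single (p1 i) 1)) with hX
  set Y : Matrix (Fin m) (Fin m) ℤ :=
    Matrix.of (fun i => actCoroot A (w1 i) (Pi.single (p1 i) 1)) with hY
  set X₂ : Matrix (Fin m) (Fin m) ℤ :=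
    Matrix.of (fun i => actRoot B (w2 i) (Pi.single (p2 i) 1)) with hX2
  set Y₂ : Matrix (Fin m) (Fin m) ℤ :=
    Matrix.of (fun i => actCoroot B (w2 i) (Pi.single (p2 i) 1)) with hY2
  have hBeq : B = Y * A * Xᵀ := by
    ext i j
    rw [← hpair1 i j]
    exact pairing_matrix A Y X i j
  have hAeq : A = Y₂ * B * X₂ᵀ := by
    ext i j
    rw [← hpair2 i j]
    exact pairing_matrix B Y₂ X₂ i j
  have hdetB : B.det = Y.det * A.det * X.det := by
    rw [hBeq, Matrix.det_mul, Matrix.det_mul, Matrix.det_transpose]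
  have hdetA : A.det = Y₂.det * B.det * X₂.det := by
    rw [hAeq, Matrix.det_mul, Matrix.det_mul, Matrix.det_transpose]
  by_cases hA0 : A.det = 0
  · rw [hA0, hdetB, hA0, mul_zero, zero_mul]
  · -- determinants nonzero
    have hB0 : B.det ≠ 0 := by
      intro h0
      exact hA0 (by rw [hdetA, h0, mul_zero, zero_mul])
    have hXdet : X.det ≠ 0 := by
      intro h0
      exact hB0 (by rw [hdetB, h0, mul_zero])
    -- the unit relation
    have hunit : (Y.det * X.det) * (Y₂.det * X₂.det) = 1 := by
      have h1 : A.det * ((Y.det * X.det) * (Y₂.det * X₂.det)) = A.det * 1 := by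
        linear_combination -hdetA - (Y₂.det * X₂.det) * hdetB
      exact mul_left_cancel₀ hA0 h1
    -- positivity of Y.det * X.det over ℚ
    have hYQ : Y.map (Int.cast : ℤ → ℚ) =
        Matrix.diagonal (fun i => (dA (p1 i))⁻¹) * X.map (Int.cast : ℤ → ℚ) *
          Matrix.diagonal dA := by
      ext i k
      have hkey := morita_key A dA hdA (w1 i) (Pi.single (p1 i) 1) (Pi.single (p1 i) 1)
        (dA (p1 i)) (fun l => by
          rcases eq_or_ne l (p1 i) with h | h
          · subst h; simp
          · simp [Pi.single_apply, h]) k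
      have hpi : dA (p1 i) ≠ 0 := (hdApos (p1 i)).ne'
      rw [Matrix.mul_diagonal, Matrix.diagonal_mul]
      simp only [Matrix.map_apply, hX, hY, Matrix.of_apply]
      field_simp
      linear_combination hkey
    have hYdetQ : ((Y.det : ℤ) : ℚ) =
        (∏ i, (dA (p1 i))⁻¹) * ((X.det : ℤ) : ℚ) * ∏ i, dA i := by
      have hmapdet : ∀ M : Matrix (Fin m) (Fin m) ℤ,
          (M.map (Int.cast : ℤ → ℚ)).det = ((M.det : ℤ) : ℚ) :=
        fun M => (RingHom.map_det (Int.castRingHom ℚ) M).symm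
      have := congrArg Matrix.det hYQ
      rw [Matrix.det_mul, Matrix.det_mul, Matrix.det_diagonal, Matrix.det_diagonal,
        hmapdet, hmapdet] at this
      exact this
    have hkposQ : (0 : ℚ) < ((Y.det * X.det : ℤ) : ℚ) := by
      have e1 : ((Y.det * X.det : ℤ) : ℚ) =
          (∏ i, (dA (p1 i))⁻¹) * (∏ i, dA i) * ((X.det : ℤ) : ℚ) ^ 2 := by
        rw [Int.cast_mul]
        rw [hYdetQ]
        ring
      rw [e1]
      have p1pos : (0 : ℚ) < ∏ i, (dA (p1 i))⁻¹ :=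
        Finset.prod_pos fun i _ => inv_pos.mpr (hdApos (p1 i))
      have p2pos : (0 : ℚ) < ∏ i, dA i := Finset.prod_pos fun i _ => hdApos i
      have p3pos : (0 : ℚ) < ((X.det : ℤ) : ℚ) ^ 2 := by
        have : ((X.det : ℤ) : ℚ) ≠ 0 := Int.cast_ne_zero.mpr hXdet
        positivity
      positivity
    have hkpos : 0 < Y.det * X.det := by exact_mod_cast hkposQ
    have hk1 : Y.det * X.det = 1 :=
      Int.eq_one_of_mul_eq_one_right hkpos.le hunit
    rw [hdetB]
    linear_combination (-A.det) * hk1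
end

section
/- Let A=(a_ij) be an n×n symmetrizable GCM with index set X={1,…,n}, let Y⊆X, and let d≥2 be an integer. Assume either (i) d divides a_ji for all i∈Y and all j∈X∖Y, or (ii) d divides a_ij for all i∈Y and all j∈X∖Y. Let W_Y be the subgroup of the Weyl group W generated by {s_k : k∈Y}. Then for every m and every family w_1,…,w_m∈W and p_1,…,p_m∈Y, there exist v_1,…,v_m∈W_Y such that ⟨w_i·α_{p_i}∨, w_j·α_{p_j}⟩ ≡ ⟨v_i·α_{p_i}∨, v_j·α_{p_j}⟩ (mod d) for all 1≤i,j≤m. Equivalently: every finite multiset Σ of real roots lying in W·Δre(Y), where Δre(Y)=W_Y·{α_p : p∈Y}, admits a multiset Σ̄ of elements of Δre(Y) whose matrix of coroot–root pairings is congruent to that of Σ modulo d. -/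
namespace Aux
open Matrix

variable {n : ℕ} (A : Matrix (Fin n) (Fin n) ℤ)

lemma sCoroot_eq_transpose (k : Fin n) : sCoroot A k = sRoot Aᵀ k := by
  funext y i
  simp [sCoroot, sRoot, Matrix.transpose_apply, mul_comm]

lemma actCoroot_eq_transpose (w : List (Fin n)) (y : Fin n → ℤ) :
    actCoroot A w y = actRoot Aᵀ w y := by
  simp [actCoroot, actRoot, funext fun k => sCoroot_eq_transpose A k]

lemma actRoot_eq_transpose (w : List (Fin n)) (x : Fin n → ℤ) :
    actRoot A w x = actCoroot Aᵀ w x := by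
  rw [actCoroot_eq_transpose, Matrix.transpose_transpose]

lemma pairing_transpose (y x : Fin n → ℤ) : pairing Aᵀ x y = pairing A y x := by
  rw [pairing, pairing, Finset.sum_comm]
  refine Finset.sum_congr rfl fun i _ => Finset.sum_congr rfl fun j _ => ?_
  simp [Matrix.transpose_apply]; ring

lemma sRoot_eq (k : Fin n) (x : Fin n → ℤ) :
    sRoot A k x = x - Pi.single k (∑ j, A k j * x j) := by
  funext i
  simp [sRoot, Pi.single_apply]

lemma sCoroot_eq (k : Fin n) (y : Fin n → ℤ) :
    sCoroot A k y = y - Pi.single k (∑ j, y j * A j k) := by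
  funext i
  simp [sCoroot, Pi.single_apply]

lemma pairing_sub_right (y x x' : Fin n → ℤ) :
    pairing A y (x - x') = pairing A y x - pairing A y x' := by
  simp [pairing, mul_sub, Finset.sum_sub_distrib]

lemma pairing_sub_left (y y' x : Fin n → ℤ) :
    pairing A (y - y') x = pairing A y x - pairing A y' x := by
  simp [pairing, sub_mul, Finset.sum_sub_distrib]

lemma pairing_single_right (y : Fin n → ℤ) (k : Fin n) (c : ℤ) :
    pairing A y (Pi.single k c) = (∑ i, y i * A i k) * c := by
  rw [pairing, Finset.sum_comm]
  simp [Pi.single_apply, mul_ite, Finset.sum_mul]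

lemma pairing_single_left (x : Fin n → ℤ) (k : Fin n) (c : ℤ) :
    pairing A (Pi.single k c) x = c * (∑ j, A k j * x j) := by
  simp [pairing, Pi.single_apply, ite_mul, Finset.mul_sum, mul_assoc]

lemma pairing_s (k : Fin n) (hkk : A k k = 2) (y x : Fin n → ℤ) :
    pairing A (sCoroot A k y) (sRoot A k x) = pairing A y x := by
  rw [sRoot_eq, sCoroot_eq, pairing_sub_left, pairing_sub_right, pairing_sub_right,
    pairing_single_right, pairing_single_left, pairing_single_left]
  have h1 : ∑ j, A k j * (Pi.single k (∑ l, A k l * x l) : Fin n → ℤ) j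
      = A k k * (∑ l, A k l * x l) := by
    simp [Pi.single_apply, mul_ite]
  rw [h1, hkk]
  ring


lemma actRoot_cons (k : Fin n) (t : List (Fin n)) (x : Fin n → ℤ) :
    actRoot A (k :: t) x = sRoot A k (actRoot A t x) := rfl

lemma actCoroot_cons (k : Fin n) (t : List (Fin n)) (y : Fin n → ℤ) :
    actCoroot A (k :: t) y = sCoroot A k (actCoroot A t y) := rfl

lemma actRoot_append (u w : List (Fin n)) (x : Fin n → ℤ) :
    actRoot A (u ++ w) x = actRoot A u (actRoot A w x) := by
  simp [actRoot, List.foldr_append]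

lemma sRoot_sRoot (k : Fin n) (hkk : A k k = 2) (x : Fin n → ℤ) :
    sRoot A k (sRoot A k x) = x := by
  have hc : ∑ j, A k j * sRoot A k x j = -(∑ j, A k j * x j) := by
    simp only [sRoot, mul_sub, mul_ite, mul_zero, Finset.sum_sub_distrib]
    rw [Finset.sum_ite_eq' Finset.univ k (fun j => A k j * ∑ l, A k l * x l)]
    simp [hkk]
    ring
  have happ : ∀ z : Fin n → ℤ, sRoot A k z k = z k - ∑ j, A k j * z j := by
    intro z; simp [sRoot]
  funext i
  by_cases h : i = k
  · rw [h, happ, hc, happ]; ring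
  · simp [sRoot, h]

lemma actRoot_rev (w : List (Fin n)) (hdiag : ∀ k, A k k = 2) (x : Fin n → ℤ) :
    actRoot A w (actRoot A w.reverse x) = x := by
  induction w generalizing x with
  | nil => rfl
  | cons k t ih =>
      rw [List.reverse_cons, actRoot_append, actRoot_cons]
      have : actRoot A [k] x = sRoot A k x := rfl
      rw [this, ih (sRoot A k x), sRoot_sRoot A k (hdiag k)]

lemma pairing_act (w : List (Fin n)) (hdiag : ∀ k, A k k = 2) (y x : Fin n → ℤ) :
    pairing A (actCoroot A w y) (actRoot A w x) = pairing A y x := by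
  induction w with
  | nil => rfl
  | cons k t ih => rw [actRoot_cons, actCoroot_cons, pairing_s A k (hdiag k), ih]

lemma pairing_actCoroot_left (w : List (Fin n)) (hdiag : ∀ k, A k k = 2) (y x : Fin n → ℤ) :
    pairing A (actCoroot A w y) x = pairing A y (actRoot A w.reverse x) := by
  conv_lhs => rw [← actRoot_rev A w hdiag x]
  rw [pairing_act A w hdiag]

lemma pairing_congr_right (d : ℤ) (y : Fin n → ℤ) {x x' : Fin n → ℤ}
    (h : ∀ i, d ∣ x i - x' i) : d ∣ pairing A y x - pairing A y x' := by
  have : pairing A y x - pairing A y x' = pairing A y (x - x') := by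
    rw [pairing_sub_right]
  rw [this, pairing]
  refine Finset.dvd_sum fun i _ => Finset.dvd_sum fun j _ => ?_
  exact Dvd.dvd.mul_left (h j) _

lemma sRoot_congr (d : ℤ) (k : Fin n) {x x' : Fin n → ℤ}
    (h : ∀ i, d ∣ x i - x' i) : ∀ i, d ∣ sRoot A k x i - sRoot A k x' i := by
  intro i
  by_cases hik : i = k
  · subst hik
    have he : sRoot A i x i - sRoot A i x' i
        = (x i - x' i) - ∑ j, A i j * (x j - x' j) := by
      simp [sRoot, mul_sub, Finset.sum_sub_distrib]
      ring
    rw [he]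
    exact dvd_sub (h i) (Finset.dvd_sum fun j _ => Dvd.dvd.mul_left (h j) _)
  · simpa [sRoot, hik] using h i


lemma actRoot_filter (d : ℤ) (Y : Set (Fin n)) [DecidablePred (· ∈ Y)]
    (hdivY : ∀ k ∉ Y, ∀ j ∈ Y, d ∣ A k j)
    (x : Fin n → ℤ) (hsupp : ∀ i ∉ Y, d ∣ x i) (u : List (Fin n)) :
    (∀ i ∉ Y, d ∣ actRoot A u x i) ∧
      (∀ i, d ∣ actRoot A u x i - actRoot A (u.filter fun k => decide (k ∈ Y)) x i) := by
  induction u with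
  | nil => exact ⟨hsupp, fun i => by simp [actRoot]⟩
  | cons k t ih =>
      obtain ⟨h1, h2⟩ := ih
      by_cases hk : k ∈ Y
      · have hf : (k :: t).filter (fun k => decide (k ∈ Y))
            = k :: t.filter (fun k => decide (k ∈ Y)) := by
          simp [List.filter_cons, hk]
        rw [hf]
        constructor
        · intro i hi
          have hik : i ≠ k := fun h => hi (h ▸ hk)
          simpa [actRoot_cons, sRoot, hik] using h1 i hi
        · intro i
          rw [actRoot_cons, actRoot_cons]
          exact sRoot_congr A d k h2 i
      · have hf : (k :: t).filter (fun k => decide (k ∈ Y))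
            = t.filter (fun k => decide (k ∈ Y)) := by
          simp [List.filter_cons, hk]
        rw [hf]
        have hc : d ∣ ∑ j, A k j * actRoot A t x j := by
          refine Finset.dvd_sum fun j _ => ?_
          by_cases hj : j ∈ Y
          · exact Dvd.dvd.mul_right (hdivY k hk j hj) _
          · exact Dvd.dvd.mul_left (h1 j hj) _
        constructor
        · intro i hi
          by_cases hik : i = k
          · subst hik
            simpa [actRoot_cons, sRoot] using dvd_sub (h1 i hi) hc
          · simpa [actRoot_cons, sRoot, hik] using h1 i hi
        · intro i
          have hstep : d ∣ actRoot A (k :: t) x i - actRoot A t x i := by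
            by_cases hik : i = k
            · subst hik
              simpa [actRoot_cons, sRoot] using dvd_neg.mpr hc
            · simp [actRoot_cons, sRoot, hik]
          have := dvd_add hstep (h2 i)
          simpa using this

/-- Main one-pair lemma, hypothesis (i) form. -/
lemma main_lemma (d : ℤ) (hdiag : ∀ k, A k k = 2) (Y : Set (Fin n)) [DecidablePred (· ∈ Y)]
    (hdivY : ∀ k ∉ Y, ∀ j ∈ Y, d ∣ A k j)
    (w w' : List (Fin n)) (p q : Fin n) (hp : p ∈ Y) (hq : q ∈ Y) :
    d ∣ pairing A (actCoroot A w (Pi.single p 1)) (actRoot A w' (Pi.single q 1))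
      - pairing A (actCoroot A (w.filter fun k => decide (k ∈ Y)) (Pi.single p 1))
          (actRoot A (w'.filter fun k => decide (k ∈ Y)) (Pi.single q 1)) := by
  have hqsupp : ∀ i ∉ Y, d ∣ (Pi.single q 1 : Fin n → ℤ) i := by
    intro i hi
    have hiq : i ≠ q := fun h => hi (h ▸ hq)
    simp [Pi.single_apply, hiq]
  rw [pairing_actCoroot_left A w hdiag, pairing_actCoroot_left A _ hdiag,
    ← actRoot_append, ← actRoot_append, ← List.filter_reverse, ← List.filter_append]
  exact pairing_congr_right A d _
    (actRoot_filter A d Y hdivY _ hqsupp (w.reverse ++ w')).2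

end Aux

open Matrix

/-- Let `A` be a symmetrizable GCM, `Y` a subset of the index set and
`d ≥ 2`, with either `d ∣ aⱼᵢ` or `d ∣ aᵢⱼ` for all `i ∈ Y`, `j ∉ Y`. Then for any family
of real roots `wᵢ·α_{pᵢ}` with `pᵢ ∈ Y`, there are Weyl words `vᵢ` with all letters in `Y`
(so that `vᵢ·α_{pᵢ}` are real roots of `Y`) such that the matrices of coroot–root pairings
agree modulo `d`. -/
theorem pisystem_mod_d {n : ℕ} (A : Matrix (Fin n) (Fin n) ℤ) (hA : IsGCM A)
    (hsym : ∃ d : Fin n → ℚ, IsSymmetrizer A d)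
    (Y : Set (Fin n)) (d : ℕ) (hd : 2 ≤ d)
    (hdiv : (∀ i ∈ Y, ∀ j ∉ Y, (d : ℤ) ∣ A j i) ∨ (∀ i ∈ Y, ∀ j ∉ Y, (d : ℤ) ∣ A i j))
    (m : ℕ) (w : Fin m → List (Fin n)) (p : Fin m → Fin n) (hp : ∀ i, p i ∈ Y) :
    ∃ v : Fin m → List (Fin n), (∀ i, ∀ k ∈ v i, k ∈ Y) ∧
      ∀ i j,
        Int.ModEq (d : ℤ)
          (pairing A (actCoroot A (w i) (Pi.single (p i) 1))
            (actRoot A (w j) (Pi.single (p j) 1)))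
          (pairing A (actCoroot A (v i) (Pi.single (p i) 1))
            (actRoot A (v j) (Pi.single (p j) 1))) := by
  classical
  have hdiag : ∀ k, A k k = 2 := hA.1
  have key : ∀ (u u' : List (Fin n)) (a b : Fin n → ℤ),
      pairing A (actCoroot A u a) (actRoot A u' b)
        = pairing Aᵀ (actCoroot Aᵀ u' b) (actRoot Aᵀ u a) := by
    intro u u' a b
    rw [← Aux.pairing_transpose A, Aux.actRoot_eq_transpose A u' b, Aux.actCoroot_eq_transpose A u a]
  refine ⟨fun i => (w i).filter (fun k => decide (k ∈ Y)), fun i k hk => ?_, fun i j => ?_⟩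
  · exact of_decide_eq_true (List.mem_filter.mp hk).2
  · rcases hdiv with h | h
    · have hdivY : ∀ k ∉ Y, ∀ j ∈ Y, (d : ℤ) ∣ A k j := fun k hk j hj => h j hj k hk
      exact Int.modEq_iff_dvd.mpr (dvd_sub_comm.mp
        (Aux.main_lemma A (d : ℤ) hdiag Y hdivY (w i) (w j) (p i) (p j) (hp i) (hp j)))
    · have hdiagT : ∀ k, Aᵀ k k = 2 := fun k => hdiag k
      have hdivY : ∀ k ∉ Y, ∀ j ∈ Y, (d : ℤ) ∣ Aᵀ k j := fun k hk j hj => h j hj k hk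
      rw [key, key]
      exact Int.modEq_iff_dvd.mpr (dvd_sub_comm.mp
        (Aux.main_lemma Aᵀ (d : ℤ) hdiagT Y hdivY (w j) (w i) (p j) (p i) (hp j) (hp i)))
end

section
/- Let A=(a_ij) be a doubly-laced symmetrizable GCM such that X_sh={p,q} with p≠q and a_pq=a_qp=−1 (so X_sh is of type A_2). Then there do not exist three real roots β_1,β_2,β_3∈W·{α_p,α_q} (the shortest real roots) whose pairing matrix (⟨β_i∨,β_j⟩)_{i,j=1}^3 is congruent modulo 2 to the Cartan matrix of type A_2×A_1, i.e., with ⟨β_1∨,β_2⟩ and ⟨β_2∨,β_1⟩ odd and ⟨β_1∨,β_3⟩, ⟨β_3∨,β_1⟩, ⟨β_2∨,β_3⟩, ⟨β_3∨,β_2⟩ all even. In particular there is no π-system of type A_2×A_1 in A contained wholly in the shortest real roots. The same conclusions hold with X_long of type A_2 and the longest real roots W·{α_p,α_q} for X_long={p,q}. -/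
open Matrix

section Aux

variable {n : ℕ}

lemma odd_cast2 {m : ℤ} (h : Odd m) : (m : ZMod 2) = 1 := by
  obtain ⟨c, rfl⟩ := h; push_cast; simp [show (2:ZMod 2) = 0 from rfl]

lemma even_cast2 {m : ℤ} (h : Even m) : (m : ZMod 2) = 0 := by
  obtain ⟨c, rfl⟩ := h; push_cast; ring_nf; simp [show (2:ZMod 2) = 0 from rfl]

set_option synthInstance.maxSize 400 in
lemma f2final : ∀ a1 b1 a2 b2 a3 b3 : ZMod 2, ¬(a1 = 0 ∧ b1 = 0) → ¬(a2 = 0 ∧ b2 = 0) →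
    ¬(a3 = 0 ∧ b3 = 0) → a1*b2 + b1*a2 = 1 → a1*b3 + b1*a3 = 0 → a2*b3 + b2*a3 = 0 → False := by
  decide

lemma evenEntry (A : Matrix (Fin n) (Fin n) ℤ) (hA : IsGCM A)
    (d : Fin n → ℚ) (hd : IsSymmetrizer A d)
    (hlaced : ∀ i j, i ≠ j → A i j * A j i = 0 ∨ A i j * A j i = 1 ∨ A i j * A j i = 2)
    (i j : Fin n) (hij : i ≠ j) (hlt : d i < d j) : (A i j : ZMod 2) = 0 := by
  obtain ⟨hdpos, hsym⟩ := hd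
  have h1 : A i j ≤ 0 := hA.2.1 i j hij
  have h2 : A j i ≤ 0 := hA.2.1 j i (Ne.symm hij)
  have hs := hsym i j
  rcases hlaced i j hij with h | h | h
  · rcases mul_eq_zero.mp h with h' | h'
    · simp [h']
    · simp [hA.2.2 j i h']
  · exfalso
    have hne1 : A i j ≠ 0 := by rintro h0; rw [h0] at h; simp at h
    have hne2 : A j i ≠ 0 := by rintro h0; rw [h0] at h; simp at h
    have hb1 : A i j ≤ -1 := by omega
    have hb2 : A j i ≤ -1 := by omega
    have hge1 : -1 ≤ A i j := by nlinarith
    have e1 : A i j = -1 := le_antisymm hb1 hge1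
    have e2 : A j i = -1 := by rw [e1] at h; omega
    rw [e1, e2] at hs
    push_cast at hs
    have : d i = d j := by linarith
    linarith
  · have hne1 : A i j ≠ 0 := by rintro h0; rw [h0] at h; simp at h
    have hne2 : A j i ≠ 0 := by rintro h0; rw [h0] at h; simp at h
    have hb1 : A i j ≤ -1 := by omega
    have hb2 : A j i ≤ -1 := by omega
    have hge : -2 ≤ A i j := by nlinarith
    have hcases : A i j = -1 ∨ A i j = -2 := by omega
    rcases hcases with e1 | e1
    · exfalso
      have e2 : A j i = -2 := by rw [e1] at h; omega
      rw [e1, e2] at hs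
      push_cast at hs
      have := hdpos j
      linarith
    · rw [e1]; decide

lemma shortInv (A : Matrix (Fin n) (Fin n) ℤ) (p q : Fin n) (hpq : p ≠ q)
    (hApp : (A p p : ZMod 2) = 0) (hAqq : (A q q : ZMod 2) = 0)
    (hApq : (A p q : ZMod 2) = 1) (hAqp : (A q p : ZMod 2) = 1)
    (hrp : ∀ j, j ≠ p → j ≠ q → (A p j : ZMod 2) = 0)
    (hrq : ∀ j, j ≠ p → j ≠ q → (A q j : ZMod 2) = 0)
    (r : Fin n) (hr : r = p ∨ r = q) (w : List (Fin n)) :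
    (∀ j, j ≠ p → j ≠ q → ((actCoroot A w (Pi.single r 1)) j : ZMod 2) = 0) ∧
    ((actCoroot A w (Pi.single r 1)) p : ZMod 2) = ((actRoot A w (Pi.single r 1)) p : ZMod 2) ∧
    ((actCoroot A w (Pi.single r 1)) q : ZMod 2) = ((actRoot A w (Pi.single r 1)) q : ZMod 2) ∧
    ¬(((actRoot A w (Pi.single r 1)) p : ZMod 2) = 0 ∧
      ((actRoot A w (Pi.single r 1)) q : ZMod 2) = 0) := by
  induction w with
  | nil =>
    simp only [actRoot, actCoroot, List.foldr_nil]
    rcases hr with rfl | rfl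
    · refine ⟨fun j hjp hjq => by simp [Pi.single_apply, hjp], by simp, by simp, ?_⟩
      simp [Pi.single_apply]
    · refine ⟨fun j hjp hjq => by simp [Pi.single_apply, hjq], by simp, by simp, ?_⟩
      simp [Pi.single_apply, hpq]
  | cons k t ih =>
    obtain ⟨ihL, ihp, ihq, ihnz⟩ := ih
    set x := actRoot A t (Pi.single r 1) with hx
    set y := actCoroot A t (Pi.single r 1) with hy
    have hxk : actRoot A (k :: t) (Pi.single r 1) = sRoot A k x := rfl
    have hyk : actCoroot A (k :: t) (Pi.single r 1) = sCoroot A k y := rfl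
    rw [hxk, hyk]
    have huniv : (Finset.univ : Finset (Fin n))
        = insert p (insert q ((Finset.univ : Finset (Fin n)) \ {p, q})) := by
      ext j
      by_cases hjp : j = p <;> by_cases hjq : j = q <;> simp [hjp, hjq, hpq]
    have hSy : ∀ m : Fin n, (∑ j, (y j : ZMod 2) * (A j m : ZMod 2))
        = (y p : ZMod 2) * (A p m : ZMod 2) + (y q : ZMod 2) * (A q m : ZMod 2) := by
      intro m
      rw [huniv, Finset.sum_insert (by simp [hpq]), Finset.sum_insert (by simp),
        Finset.sum_eq_zero (fun j hj => ?_)]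
      · ring
      · simp only [Finset.mem_sdiff, Finset.mem_insert, Finset.mem_singleton] at hj
        rw [ihL j (by tauto) (by tauto)]; ring
    have hSx : ∀ m : Fin n, m = p ∨ m = q →
        (∑ j, (A m j : ZMod 2) * (x j : ZMod 2))
        = (A m p : ZMod 2) * (x p : ZMod 2) + (A m q : ZMod 2) * (x q : ZMod 2) := by
      intro m hm
      rw [huniv, Finset.sum_insert (by simp [hpq]), Finset.sum_insert (by simp),
        Finset.sum_eq_zero (fun j hj => ?_)]
      · ring
      · simp only [Finset.mem_sdiff, Finset.mem_insert, Finset.mem_singleton] at hj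
        rcases hm with rfl | rfl
        · rw [hrp j (by tauto) (by tauto)]; ring
        · rw [hrq j (by tauto) (by tauto)]; ring
    by_cases hkp : k = p
    · subst hkp
      have eSy : (∑ j, (y j : ZMod 2) * (A j k : ZMod 2)) = (x q : ZMod 2) := by
        rw [hSy k, hApp, hAqp, ihq]; ring
      have eSx : (∑ j, (A k j : ZMod 2) * (x j : ZMod 2)) = (x q : ZMod 2) := by
        rw [hSx k (Or.inl rfl), hApp, hApq]; ring
      refine ⟨fun j hjp hjq => ?_, ?_, ?_, ?_⟩
      · simp only [sCoroot, if_neg hjp]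
        push_cast; simpa using ihL j hjp hjq
      · simp only [sRoot, sCoroot, if_pos rfl]
        push_cast
        rw [eSy, eSx, ihp]
      · simp only [sRoot, sCoroot, if_neg (Ne.symm hpq)]
        push_cast; simpa using ihq
      · simp only [sRoot, if_pos rfl, if_neg (Ne.symm hpq)]
        push_cast
        rw [eSx]
        rintro ⟨h1, h2⟩
        rw [sub_zero] at h2
        rw [h2, sub_zero] at h1
        exact ihnz ⟨h1, h2⟩
    · by_cases hkq : k = q
      · subst hkq
        have eSy : (∑ j, (y j : ZMod 2) * (A j k : ZMod 2)) = (x p : ZMod 2) := by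
          rw [hSy k, hAqq, hApq, ihp]; ring
        have eSx : (∑ j, (A k j : ZMod 2) * (x j : ZMod 2)) = (x p : ZMod 2) := by
          rw [hSx k (Or.inr rfl), hAqq, hAqp]; ring
        refine ⟨fun j hjp hjq => ?_, ?_, ?_, ?_⟩
        · simp only [sCoroot, if_neg hjq]
          push_cast; simpa using ihL j hjp hjq
        · simp only [sRoot, sCoroot, if_neg hpq]
          push_cast; simpa using ihp
        · simp only [sRoot, sCoroot, if_pos rfl]
          push_cast
          rw [eSy, eSx, ihq]
        · simp only [sRoot, if_pos rfl, if_neg hpq]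
          push_cast
          rw [eSx]
          rintro ⟨h1, h2⟩
          rw [sub_zero] at h1
          rw [h1, sub_zero] at h2
          exact ihnz ⟨h1, h2⟩
      · have eSy : (∑ j, (y j : ZMod 2) * (A j k : ZMod 2)) = 0 := by
          rw [hSy k, hrp k hkp hkq, hrq k hkp hkq]; ring
        refine ⟨fun j hjp hjq => ?_, ?_, ?_, ?_⟩
        · by_cases hjk : j = k
          · simp only [sCoroot, if_pos hjk]
            push_cast
            rw [eSy, ihL j hjp hjq]
            ring
          · simp only [sCoroot, if_neg hjk]
            push_cast; simpa using ihL j hjp hjq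
        · simp only [sRoot, sCoroot, if_neg (Ne.symm hkp : p ≠ k)]
          push_cast; simpa using ihp
        · simp only [sRoot, sCoroot, if_neg (Ne.symm hkq : q ≠ k)]
          push_cast; simpa using ihq
        · simp only [sRoot, if_neg (Ne.symm hkp : p ≠ k), if_neg (Ne.symm hkq : q ≠ k)]
          push_cast; simpa using ihnz

lemma pairShort (A : Matrix (Fin n) (Fin n) ℤ) (p q : Fin n) (hpq : p ≠ q)
    (hApp : (A p p : ZMod 2) = 0) (hAqq : (A q q : ZMod 2) = 0)
    (hApq : (A p q : ZMod 2) = 1) (hAqp : (A q p : ZMod 2) = 1)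
    (hrp : ∀ j, j ≠ p → j ≠ q → (A p j : ZMod 2) = 0)
    (hrq : ∀ j, j ≠ p → j ≠ q → (A q j : ZMod 2) = 0)
    (y x : Fin n → ℤ) (hyL : ∀ j, j ≠ p → j ≠ q → (y j : ZMod 2) = 0) :
    ((pairing A y x : ℤ) : ZMod 2)
      = (y p : ZMod 2) * (x q : ZMod 2) + (y q : ZMod 2) * (x p : ZMod 2) := by
  have huniv : (Finset.univ : Finset (Fin n))
      = insert p (insert q ((Finset.univ : Finset (Fin n)) \ {p, q})) := by
    ext j
    by_cases hjp : j = p <;> by_cases hjq : j = q <;> simp [hjp, hjq, hpq]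
  have hinner : ∀ i : Fin n, (∑ j, (y i : ZMod 2) * (A i j : ZMod 2) * (x j : ZMod 2))
      = (if i = p then (y p : ZMod 2) * (x q : ZMod 2)
        else if i = q then (y q : ZMod 2) * (x p : ZMod 2) else 0) := by
    intro i
    by_cases hip : i = p
    · subst hip
      rw [if_pos rfl, huniv, Finset.sum_insert (by simp [hpq]), Finset.sum_insert (by simp),
        Finset.sum_eq_zero (fun j hj => ?_), hApp, hApq]
      · ring
      · simp only [Finset.mem_sdiff, Finset.mem_insert, Finset.mem_singleton] at hj
        rw [hrp j (by tauto) (by tauto)]; ring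
    · by_cases hiq : i = q
      · subst hiq
        rw [if_neg hip, if_pos rfl, huniv, Finset.sum_insert (by simp [hpq]),
          Finset.sum_insert (by simp), Finset.sum_eq_zero (fun j hj => ?_), hAqq, hAqp]
        · ring
        · simp only [Finset.mem_sdiff, Finset.mem_insert, Finset.mem_singleton] at hj
          rw [hrq j (by tauto) (by tauto)]; ring
      · rw [if_neg hip, if_neg hiq]
        exact Finset.sum_eq_zero fun j _ => by rw [hyL i hip hiq]; ring
  unfold pairing
  push_cast
  rw [Finset.sum_congr rfl (fun i _ => hinner i), huniv,
    Finset.sum_insert (by simp [hpq]), Finset.sum_insert (by simp),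
    Finset.sum_eq_zero (fun i hi => ?_)]
  · rw [if_pos rfl, if_neg (Ne.symm hpq), if_pos rfl]; ring
  · simp only [Finset.mem_sdiff, Finset.mem_insert, Finset.mem_singleton] at hi
    rw [if_neg (by tauto), if_neg (by tauto)]

lemma coreShort (A : Matrix (Fin n) (Fin n) ℤ) (p q : Fin n) (hpq : p ≠ q)
    (hApp : (A p p : ZMod 2) = 0) (hAqq : (A q q : ZMod 2) = 0)
    (hApq : (A p q : ZMod 2) = 1) (hAqp : (A q p : ZMod 2) = 1)
    (hrp : ∀ j, j ≠ p → j ≠ q → (A p j : ZMod 2) = 0)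
    (hrq : ∀ j, j ≠ p → j ≠ q → (A q j : ZMod 2) = 0) :
    ¬ ∃ (w : Fin 3 → List (Fin n)) (r : Fin 3 → Fin n),
        (∀ i, r i = p ∨ r i = q) ∧
        Odd (pairing A (actCoroot A (w 0) (Pi.single (r 0) 1))
          (actRoot A (w 1) (Pi.single (r 1) 1))) ∧
        Odd (pairing A (actCoroot A (w 1) (Pi.single (r 1) 1))
          (actRoot A (w 0) (Pi.single (r 0) 1))) ∧
        Even (pairing A (actCoroot A (w 0) (Pi.single (r 0) 1))
          (actRoot A (w 2) (Pi.single (r 2) 1))) ∧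
        Even (pairing A (actCoroot A (w 2) (Pi.single (r 2) 1))
          (actRoot A (w 0) (Pi.single (r 0) 1))) ∧
        Even (pairing A (actCoroot A (w 1) (Pi.single (r 1) 1))
          (actRoot A (w 2) (Pi.single (r 2) 1))) ∧
        Even (pairing A (actCoroot A (w 2) (Pi.single (r 2) 1))
          (actRoot A (w 1) (Pi.single (r 1) 1))) := by
  rintro ⟨w, r, hr, h12, h21, h13, h31, h23, h32⟩
  obtain ⟨L0, P0, Q0, N0⟩ := shortInv A p q hpq hApp hAqq hApq hAqp hrp hrq (r 0) (hr 0) (w 0)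
  obtain ⟨L1, P1, Q1, N1⟩ := shortInv A p q hpq hApp hAqq hApq hAqp hrp hrq (r 1) (hr 1) (w 1)
  obtain ⟨L2, P2, Q2, N2⟩ := shortInv A p q hpq hApp hAqq hApq hAqp hrp hrq (r 2) (hr 2) (w 2)
  have e12 := pairShort A p q hpq hApp hAqq hApq hAqp hrp hrq
    (actCoroot A (w 0) (Pi.single (r 0) 1)) (actRoot A (w 1) (Pi.single (r 1) 1)) L0
  have e13 := pairShort A p q hpq hApp hAqq hApq hAqp hrp hrq
    (actCoroot A (w 0) (Pi.single (r 0) 1)) (actRoot A (w 2) (Pi.single (r 2) 1)) L0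
  have e23 := pairShort A p q hpq hApp hAqq hApq hAqp hrp hrq
    (actCoroot A (w 1) (Pi.single (r 1) 1)) (actRoot A (w 2) (Pi.single (r 2) 1)) L1
  rw [odd_cast2 h12, P0, Q0] at e12
  rw [even_cast2 h13, P0, Q0] at e13
  rw [even_cast2 h23, P1, Q1] at e23
  exact f2final _ _ _ _ _ _ N0 N1 N2 e12.symm e13.symm e23.symm

lemma sCoroot_transpose (A : Matrix (Fin n) (Fin n) ℤ) :
    sCoroot A = sRoot Aᵀ := by
  funext k y i
  simp only [sCoroot, sRoot, Matrix.transpose_apply]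
  congr 1
  split
  · exact Finset.sum_congr rfl fun j _ => mul_comm _ _
  · rfl

lemma sRoot_transpose (A : Matrix (Fin n) (Fin n) ℤ) :
    sRoot A = sCoroot Aᵀ := by
  funext k y i
  simp only [sCoroot, sRoot, Matrix.transpose_apply]
  congr 1
  split
  · exact Finset.sum_congr rfl fun j _ => mul_comm _ _
  · rfl

lemma actCoroot_transpose (A : Matrix (Fin n) (Fin n) ℤ) (w : List (Fin n)) (y : Fin n → ℤ) :
    actCoroot A w y = actRoot Aᵀ w y := by
  unfold actCoroot actRoot
  rw [sCoroot_transpose]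

lemma actRoot_transpose (A : Matrix (Fin n) (Fin n) ℤ) (w : List (Fin n)) (x : Fin n → ℤ) :
    actRoot A w x = actCoroot Aᵀ w x := by
  unfold actCoroot actRoot
  rw [sRoot_transpose]

lemma pairing_transpose (A : Matrix (Fin n) (Fin n) ℤ) (y x : Fin n → ℤ) :
    pairing A y x = pairing Aᵀ x y := by
  unfold pairing
  rw [Finset.sum_comm]
  exact Finset.sum_congr rfl fun j _ => Finset.sum_congr rfl fun i _ => by
    simp only [Matrix.transpose_apply]; ring

end Aux

/-- Let `A` be a doubly-laced symmetrizable GCM. If `X_sh = {p, q}` is of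
type `A₂` (`p ≠ q`, `a_pq = a_qp = −1`), then there are no three real roots
`β₁, β₂, β₃ ∈ W·{α_p, α_q}` whose pairing matrix is congruent mod 2 to the Cartan matrix
of type `A₂ × A₁`, i.e. with `⟨β₁∨,β₂⟩, ⟨β₂∨,β₁⟩` odd and the four pairings against `β₃`
even. In particular there is no π-system of type `A₂ × A₁` wholly in the shortest real
roots. The same holds for `X_long` of type `A₂` and the longest real roots. -/
theorem no_A2xA1_in_short_A2 {n : ℕ} (A : Matrix (Fin n) (Fin n) ℤ) (hA : IsGCM A)
    (d : Fin n → ℚ) (hd : IsSymmetrizer A d)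
    (hlaced : ∀ i j, i ≠ j → A i j * A j i = 0 ∨ A i j * A j i = 1 ∨ A i j * A j i = 2)
    (hattained : ∃ i j, i ≠ j ∧ A i j * A j i = 2)
    (p q : Fin n) (hpq : p ≠ q) (hApq : A p q = -1) (hAqp : A q p = -1) :
    ((∀ i, (∀ k, d i ≤ d k) ↔ (i = p ∨ i = q)) →
      ¬ ∃ (w : Fin 3 → List (Fin n)) (r : Fin 3 → Fin n),
        (∀ i, r i = p ∨ r i = q) ∧
        Odd (pairing A (actCoroot A (w 0) (Pi.single (r 0) 1))
          (actRoot A (w 1) (Pi.single (r 1) 1))) ∧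
        Odd (pairing A (actCoroot A (w 1) (Pi.single (r 1) 1))
          (actRoot A (w 0) (Pi.single (r 0) 1))) ∧
        Even (pairing A (actCoroot A (w 0) (Pi.single (r 0) 1))
          (actRoot A (w 2) (Pi.single (r 2) 1))) ∧
        Even (pairing A (actCoroot A (w 2) (Pi.single (r 2) 1))
          (actRoot A (w 0) (Pi.single (r 0) 1))) ∧
        Even (pairing A (actCoroot A (w 1) (Pi.single (r 1) 1))
          (actRoot A (w 2) (Pi.single (r 2) 1))) ∧
        Even (pairing A (actCoroot A (w 2) (Pi.single (r 2) 1))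
          (actRoot A (w 1) (Pi.single (r 1) 1))))
    ∧
    ((∀ i, (∀ k, d k ≤ d i) ↔ (i = p ∨ i = q)) →
      ¬ ∃ (w : Fin 3 → List (Fin n)) (r : Fin 3 → Fin n),
        (∀ i, r i = p ∨ r i = q) ∧
        Odd (pairing A (actCoroot A (w 0) (Pi.single (r 0) 1))
          (actRoot A (w 1) (Pi.single (r 1) 1))) ∧
        Odd (pairing A (actCoroot A (w 1) (Pi.single (r 1) 1))
          (actRoot A (w 0) (Pi.single (r 0) 1))) ∧
        Even (pairing A (actCoroot A (w 0) (Pi.single (r 0) 1))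
          (actRoot A (w 2) (Pi.single (r 2) 1))) ∧
        Even (pairing A (actCoroot A (w 2) (Pi.single (r 2) 1))
          (actRoot A (w 0) (Pi.single (r 0) 1))) ∧
        Even (pairing A (actCoroot A (w 1) (Pi.single (r 1) 1))
          (actRoot A (w 2) (Pi.single (r 2) 1))) ∧
        Even (pairing A (actCoroot A (w 2) (Pi.single (r 2) 1))
          (actRoot A (w 1) (Pi.single (r 1) 1)))) := by
  have hApp2 : (A p p : ZMod 2) = 0 := by rw [hA.1 p]; decide
  have hAqq2 : (A q q : ZMod 2) = 0 := by rw [hA.1 q]; decide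
  have hApq2 : (A p q : ZMod 2) = 1 := by rw [hApq]; decide
  have hAqp2 : (A q p : ZMod 2) = 1 := by rw [hAqp]; decide
  constructor
  · intro hmin
    have hminp : ∀ k, d p ≤ d k := (hmin p).mpr (Or.inl rfl)
    have hminq : ∀ k, d q ≤ d k := (hmin q).mpr (Or.inr rfl)
    have hrp : ∀ j, j ≠ p → j ≠ q → (A p j : ZMod 2) = 0 := by
      intro j hjp hjq
      refine evenEntry A hA d hd hlaced p j (Ne.symm hjp) ?_
      refine lt_of_le_of_ne (hminp j) fun h => ?_
      have : ∀ k, d j ≤ d k := fun k => h ▸ hminp k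
      rcases (hmin j).mp this with rfl | rfl
      · exact hjp rfl
      · exact hjq rfl
    have hrq : ∀ j, j ≠ p → j ≠ q → (A q j : ZMod 2) = 0 := by
      intro j hjp hjq
      refine evenEntry A hA d hd hlaced q j (Ne.symm hjq) ?_
      refine lt_of_le_of_ne (hminq j) fun h => ?_
      have : ∀ k, d j ≤ d k := fun k => h ▸ hminq k
      rcases (hmin j).mp this with rfl | rfl
      · exact hjp rfl
      · exact hjq rfl
    exact coreShort A p q hpq hApp2 hAqq2 hApq2 hAqp2 hrp hrq
  · intro hmax
    have hmaxp : ∀ k, d k ≤ d p := (hmax p).mpr (Or.inl rfl)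
    have hmaxq : ∀ k, d k ≤ d q := (hmax q).mpr (Or.inr rfl)
    have hrp : ∀ j, j ≠ p → j ≠ q → (Aᵀ p j : ZMod 2) = 0 := by
      intro j hjp hjq
      rw [Matrix.transpose_apply]
      refine evenEntry A hA d hd hlaced j p hjp ?_
      refine lt_of_le_of_ne (hmaxp j) fun h => ?_
      have : ∀ k, d k ≤ d j := fun k => h ▸ hmaxp k
      rcases (hmax j).mp this with rfl | rfl
      · exact hjp rfl
      · exact hjq rfl
    have hrq : ∀ j, j ≠ p → j ≠ q → (Aᵀ q j : ZMod 2) = 0 := by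
      intro j hjp hjq
      rw [Matrix.transpose_apply]
      refine evenEntry A hA d hd hlaced j q hjq ?_
      refine lt_of_le_of_ne (hmaxq j) fun h => ?_
      have : ∀ k, d k ≤ d j := fun k => h ▸ hmaxq k
      rcases (hmax j).mp this with rfl | rfl
      · exact hjp rfl
      · exact hjq rfl
    have key : ∀ (w1 w2 : List (Fin n)) (r1 r2 : Fin n),
        pairing A (actCoroot A w1 (Pi.single r1 1)) (actRoot A w2 (Pi.single r2 1))
          = pairing Aᵀ (actCoroot Aᵀ w2 (Pi.single r2 1)) (actRoot Aᵀ w1 (Pi.single r1 1)) := by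
      intro w1 w2 r1 r2
      rw [pairing_transpose, actCoroot_transpose, actRoot_transpose]
    rintro ⟨w, r, hr, h12, h21, h13, h31, h23, h32⟩
    refine coreShort Aᵀ p q hpq ?_ ?_ ?_ ?_ hrp hrq
      ⟨w, r, hr, ?_, ?_, ?_, ?_, ?_, ?_⟩
    · rw [Matrix.transpose_apply]; exact hApp2
    · rw [Matrix.transpose_apply]; exact hAqq2
    · rw [Matrix.transpose_apply]; exact hAqp2
    · rw [Matrix.transpose_apply]; exact hApq2
    · rw [← key (w 1) (w 0) (r 1) (r 0)]; exact h21
    · rw [← key (w 0) (w 1) (r 0) (r 1)]; exact h12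
    · rw [← key (w 2) (w 0) (r 2) (r 0)]; exact h31
    · rw [← key (w 0) (w 2) (r 0) (r 2)]; exact h13
    · rw [← key (w 2) (w 1) (r 2) (r 1)]; exact h32
    · rw [← key (w 1) (w 2) (r 1) (r 2)]; exact h23
end

section
/- There do not exist β_1,β_2,β_3,β_4 ∈ Δ(B_4) with β_i−β_j ∉ Δ(B_4) for all i≠j such that the matrix (2(β_i,β_j)/(β_i,β_i))_{i,j=1}^4 equals the 4×4 block-diagonal matrix with two diagonal blocks [[2,−1],[−2,2]]. That is, there is no π-system of type B_2⊕B_2 in the root system of type B_4 (B_2⊕B_2 ⋠ B_4). -/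
/-- The dot product on `ℤ⁴` (coordinates w.r.t. the orthonormal basis `ε₁,…,ε₄`). -/
def dot4 (x y : Fin 4 → ℤ) : ℤ := ∑ i, x i * y i

/-- The root system of type `B₄`: integer vectors of squared norm 1 or 2. -/
def B4roots : Set (Fin 4 → ℤ) := {v | dot4 v v = 1 ∨ dot4 v v = 2}

/-- The Cartan matrix of type `B₂ ⊕ B₂`, each block with simple roots ordered
(long, short). -/
def B2B2 : Matrix (Fin 4) (Fin 4) ℤ :=
  !![2, -1, 0, 0; -2, 2, 0, 0; 0, 0, 2, -1; 0, 0, -2, 2]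

lemma dot4_symm (x y : Fin 4 → ℤ) : dot4 x y = dot4 y x := by
  simp only [dot4, Fin.sum_univ_four]; ring

lemma dot4_sub_self (x y : Fin 4 → ℤ) :
    dot4 (x - y) (x - y) = dot4 x x - 2 * dot4 x y + dot4 y y := by
  simp only [dot4, Fin.sum_univ_four, Pi.sub_apply]; ring

/-- There is no π-system of type `B₂ ⊕ B₂` in the root system of type `B₄`:
no roots `β₁,…,β₄ ∈ Δ(B₄)`, with no difference of two distinct members a root, satisfy
`2(βᵢ,βⱼ) = (B₂⊕B₂)ᵢⱼ (βᵢ,βᵢ)` for all `i, j`. Hence `B₂ ⊕ B₂ ⋠ B₄`. -/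
theorem no_B2B2_pisystem_in_B4 :
    ¬ ∃ β : Fin 4 → (Fin 4 → ℤ),
      (∀ i, β i ∈ B4roots) ∧
      (∀ i j, i ≠ j → β i - β j ∉ B4roots) ∧
      (∀ i j, 2 * dot4 (β i) (β j) = B2B2 i j * dot4 (β i) (β i)) := by
  rintro ⟨β, hroot, hdiff, hcart⟩
  -- ⟨β₀, β₁⟩ = -1 and ⟨β₀,β₀⟩ = 2, hence ⟨β₁,β₁⟩ = 1
  have e01 : B2B2 0 1 = -1 := by decide
  have e10 : B2B2 1 0 = -2 := by decide
  have e23 : B2B2 2 3 = -1 := by decide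
  have e32 : B2B2 3 2 = -2 := by decide
  have e13 : B2B2 1 3 = 0 := by decide
  have h01 := hcart 0 1; rw [e01] at h01
  have h10 := hcart 1 0; rw [e10] at h10
  have h23 := hcart 2 3; rw [e23] at h23
  have h32 := hcart 3 2; rw [e32] at h32
  have h13 := hcart 1 3; rw [e13] at h13
  have s01 : dot4 (β 0) (β 1) = dot4 (β 1) (β 0) := dot4_symm _ _
  have s23 : dot4 (β 2) (β 3) = dot4 (β 3) (β 2) := dot4_symm _ _
  have h0 := hroot 0
  have h2 := hroot 2
  simp only [B4roots, Set.mem_setOf_eq] at h0 h2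
  -- β₁ and β₃ are short:
  have n1 : dot4 (β 1) (β 1) = 1 := by rcases h0 with h | h <;> omega
  have n3 : dot4 (β 3) (β 3) = 1 := by rcases h2 with h | h <;> omega
  -- β₁ ⊥ β₃:
  have o13 : dot4 (β 1) (β 3) = 0 := by omega
  -- β₁ - β₃ is a root: contradiction
  have : β 1 - β 3 ∈ B4roots := by
    right
    rw [dot4_sub_self, n1, n3, o13]; ring
  exact hdiff 1 3 (by decide) this
end
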